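/- arXiv:1801.04381 — 2 statements merged into one kernel-verified Lean document; each statement's English description precedes it below -/
import Mathlib

section
/- Let S(X) = {ReLU(x) : x ∈ X} for X ⊆ ℝⁿ, where ReLU acts coordinatewise as max(0,·). If S(X) has nonzero n-dimensional Lebesgue measure (volume), then the interior of S(X) is contained in X. -/
open MeasureTheory

/-- Coordinatewise ReLU on `ℝⁿ`. -/
noncomputable def relu {n : ℕ} (x : Fin n → ℝ) : Fin n → ℝ := fun i => max 0 (x i)

/-- If `S(X) = relu '' X` has nonzero Lebesgue measure, then `interior (S X) ⊆ X`. -/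
theorem interior_relu_image_subset {n : ℕ} (X : Set (Fin n → ℝ))
    (h : volume (relu '' X) ≠ 0) : interior (relu '' X) ⊆ X := by
  intro y hy
  obtain ⟨x, hx, hxy⟩ := interior_subset hy
  have hpos : ∀ i, 0 < y i := by
    intro i
    by_contra hle
    push_neg at hle
    have h0 : y i = 0 := le_antisymm hle (by rw [← hxy]; exact le_max_left _ _)
    obtain ⟨ε, hε, hball⟩ := Metric.isOpen_iff.mp isOpen_interior y hy
    set z := Function.update y i (-(ε/2)) with hz
    have hzball : z ∈ Metric.ball y ε := by
      rw [Metric.mem_ball, dist_pi_lt_iff hε]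
      intro j
      by_cases hji : j = i
      · subst hji
        simp only [hz, Function.update_self, Real.dist_eq, h0]
        rw [abs_of_nonpos (by linarith)]
        linarith
      · simp [hz, Function.update_of_ne hji, hε]
    obtain ⟨w, _, hw⟩ := interior_subset (hball hzball)
    have h0z : 0 ≤ z i := by rw [← hw]; exact le_max_left _ _
    simp only [hz, Function.update_self] at h0z
    linarith
  have hxeq : x = y := by
    funext i
    have hyi := hpos i
    rw [← hxy] at hyi ⊢
    simp only [relu] at hyi ⊢
    have : 0 < x i := by
      rcases le_or_gt (x i) 0 with hc | hc
      · simp [max_eq_left hc] at hyi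
      · exact hc
    simp [max_eq_right this.le]
  exact hxeq ▸ hx
end

section
/- For a single quadrant: if p is a distribution on m × n matrices invariant under left multiplication by diagonal ±1 matrices, and μ is a finite measure on ℝⁿ such that for p-a.e. B the set {x : (Bx)_i = 0 for some i} is μ-null, then for every sign vector σ ∈ {−1,+1}ᵐ, E_B[μ({x : Bx ∈ Q_σ})] = μ(ℝⁿ)/2^m. -/
open MeasureTheory

/-- The sign `±1` associated with a boolean. -/
def sgn (b : Bool) : ℝ := if b then 1 else -1

/-- The open quadrant `Q_σ` of a sign vector `σ` (encoded as `Fin m → Bool`). -/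
def quadrant {m : ℕ} (σ : Fin m → Bool) : Set (Fin m → ℝ) :=
  {x | ∀ i, 0 < sgn (σ i) * x i}

lemma sgn_mul_sgn_beq (a b : Bool) : sgn (a == b) * sgn b = sgn a := by
  cases a <;> cases b <;> norm_num [sgn]

lemma measurableSet_quadrant {m : ℕ} (σ : Fin m → Bool) :
    MeasurableSet (quadrant σ) := by
  have : quadrant σ = ⋂ i, {x : Fin m → ℝ | 0 < sgn (σ i) * x i} := by
    ext x; simp [quadrant, Set.mem_iInter]
  rw [this]
  exact MeasurableSet.iInter fun i =>
    measurableSet_lt measurable_const (measurable_const.mul (measurable_pi_apply i))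

lemma measurable_apply_mat {m n : ℕ} :
    Measurable (fun q : (Fin m → Fin n → ℝ) × (Fin n → ℝ) =>
      (fun i => ∑ j, q.1 i j * q.2 j : Fin m → ℝ)) := by
  apply measurable_pi_lambda
  intro i
  apply Finset.measurable_sum
  intro j _
  exact ((measurable_pi_apply i).comp measurable_fst |>.eval).mul
    (measurable_snd.eval)

lemma measurable_apply_vec {m n : ℕ} (B : Fin m → Fin n → ℝ) :
    Measurable (fun x : Fin n → ℝ => (fun i => ∑ j, B i j * x j : Fin m → ℝ)) := by
  apply measurable_pi_lambda
  intro i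
  exact Finset.measurable_sum _ fun j _ => measurable_const.mul (measurable_pi_apply j)

/-- Single-quadrant version: if `p` is a distribution on `m × n` matrices invariant
under left multiplication by diagonal `±1` matrices and for `p`-a.e. `B` the set
where `Bx` has a zero coordinate is `μ`-null, then for every sign vector `σ`,
`E_B[μ {x : Bx ∈ Q_σ}] = μ(ℝⁿ)/2^m`. -/
theorem expected_measure_single_quadrant {m n : ℕ}
    (μ : Measure (Fin n → ℝ)) [IsFiniteMeasure μ]
    (p : Measure (Fin m → Fin n → ℝ)) [IsProbabilityMeasure p]
    (hsym : ∀ σ : Fin m → Bool,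
      Measure.map (fun B : Fin m → Fin n → ℝ => fun i j => sgn (σ i) * B i j) p = p)
    (hgen : ∀ᵐ B ∂p, μ {x : Fin n → ℝ | ∃ i, (∑ j, B i j * x j) = 0} = 0)
    (σ : Fin m → Bool) :
    ∫⁻ B, μ {x : Fin n → ℝ | (fun i => ∑ j, B i j * x j) ∈ quadrant σ} ∂p
      = μ Set.univ / 2 ^ m := by
  set F : (Fin m → Bool) → (Fin m → Fin n → ℝ) → ENNReal :=
    fun τ B => μ {x : Fin n → ℝ | (fun i => ∑ j, B i j * x j) ∈ quadrant τ} with hF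
  -- measurability of F τ
  have hFmeas : ∀ τ, Measurable (F τ) := by
    intro τ
    have hS : MeasurableSet {q : (Fin m → Fin n → ℝ) × (Fin n → ℝ) |
        (fun i => ∑ j, q.1 i j * q.2 j) ∈ quadrant τ} :=
      measurable_apply_mat (measurableSet_quadrant τ)
    exact measurable_measure_prodMk_left hS
  -- all integrals are equal
  have hEq : ∀ τ : Fin m → Bool, ∫⁻ B, F τ B ∂p = ∫⁻ B, F σ B ∂p := by
    intro τ
    have hT : Measurable (fun B : Fin m → Fin n → ℝ =>
        (fun i j => sgn ((σ i == τ i)) * B i j : Fin m → Fin n → ℝ)) := by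
      apply measurable_pi_lambda; intro i
      apply measurable_pi_lambda; intro j
      exact measurable_const.mul ((measurable_pi_apply i).comp measurable_id |>.eval)
    calc ∫⁻ B, F τ B ∂p
        = ∫⁻ B, F τ B ∂(Measure.map
            (fun B : Fin m → Fin n → ℝ => fun i j => sgn ((fun i => σ i == τ i) i) * B i j) p) := by
          rw [hsym]
      _ = ∫⁻ B, F τ (fun i j => sgn (σ i == τ i) * B i j) ∂p := by
          rw [lintegral_map (hFmeas τ) hT]
      _ = ∫⁻ B, F σ B ∂p := by
          apply lintegral_congr
          intro B
          simp only [hF]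
          congr 1
          ext x
          simp only [Set.mem_setOf_eq, quadrant]
          constructor
          · intro h i
            have := h i
            rw [show (∑ j, sgn (σ i == τ i) * B i j * x j)
                = sgn (σ i == τ i) * ∑ j, B i j * x j by
              rw [Finset.mul_sum]; exact Finset.sum_congr rfl fun j _ => by ring] at this
            rw [← mul_assoc, mul_comm (sgn (τ i)), sgn_mul_sgn_beq] at this
            exact this
          · intro h i
            have := h i
            rw [show (∑ j, sgn (σ i == τ i) * B i j * x j)
                = sgn (σ i == τ i) * ∑ j, B i j * x j by
              rw [Finset.mul_sum]; exact Finset.sum_congr rfl fun j _ => by ring]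
            rw [← mul_assoc, mul_comm (sgn (τ i)), sgn_mul_sgn_beq]
            exact this
  -- sum over all sign vectors
  have hsum : ∑ τ : Fin m → Bool, ∫⁻ B, F τ B ∂p = μ Set.univ := by
    rw [← lintegral_finset_sum _ (fun τ _ => hFmeas τ)]
    have : ∀ᵐ B ∂p, ∑ τ : Fin m → Bool, F τ B = μ Set.univ := by
      filter_upwards [hgen] with B hB
      have hAm : ∀ τ : Fin m → Bool,
          MeasurableSet {x : Fin n → ℝ | (fun i => ∑ j, B i j * x j) ∈ quadrant τ} :=
        fun τ => measurable_apply_vec B (measurableSet_quadrant τ)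
      have hdisj : Set.Pairwise ↑(Finset.univ : Finset (Fin m → Bool))
          (Function.onFun Disjoint
            (fun τ => {x : Fin n → ℝ | (fun i => ∑ j, B i j * x j) ∈ quadrant τ})) := by
        intro τ₁ _ τ₂ _ hne
        apply Set.disjoint_left.mpr
        intro x h1 h2
        obtain ⟨i, hi⟩ := Function.ne_iff.mp hne
        have a1 := h1 i
        have a2 := h2 i
        cases hb1 : τ₁ i <;> cases hb2 : τ₂ i <;>
          first
          | exact hi (hb1.trans hb2.symm)
          | (simp only [hb1, sgn, if_true, if_false, Bool.false_eq_true] at a1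
             simp only [hb2, sgn, if_true, if_false, Bool.false_eq_true] at a2
             linarith)
      have hunion : μ (⋃ τ ∈ (Finset.univ : Finset (Fin m → Bool)),
          {x : Fin n → ℝ | (fun i => ∑ j, B i j * x j) ∈ quadrant τ}) = μ Set.univ := by
        apply le_antisymm (measure_mono (Set.subset_univ _))
        have hcover : (Set.univ : Set (Fin n → ℝ)) ⊆
            {x : Fin n → ℝ | ∃ i, (∑ j, B i j * x j) = 0} ∪
            ⋃ τ ∈ (Finset.univ : Finset (Fin m → Bool)),
              {x : Fin n → ℝ | (fun i => ∑ j, B i j * x j) ∈ quadrant τ} := by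
          intro x _
          by_cases hz : ∃ i, (∑ j, B i j * x j) = 0
          · exact Or.inl hz
          · push_neg at hz
            refine Or.inr ?_
            simp only [Set.mem_iUnion]
            refine ⟨fun i => decide (0 < ∑ j, B i j * x j), Finset.mem_univ _, ?_⟩
            intro i
            by_cases hp : 0 < ∑ j, B i j * x j
            · simp [sgn, hp]
            · have hneg : (∑ j, B i j * x j) < 0 := lt_of_le_of_ne (not_lt.mp hp) (hz i)
              simp only [sgn, hp, decide_eq_true_eq]
              simp [hp]
              linarith
        calc μ Set.univ ≤ μ ({x : Fin n → ℝ | ∃ i, (∑ j, B i j * x j) = 0} ∪ _) :=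
              measure_mono hcover
          _ ≤ μ {x : Fin n → ℝ | ∃ i, (∑ j, B i j * x j) = 0} + μ _ := measure_union_le _ _
          _ = μ _ := by rw [hB, zero_add]
      calc ∑ τ : Fin m → Bool, F τ B
          = μ (⋃ τ ∈ (Finset.univ : Finset (Fin m → Bool)),
              {x : Fin n → ℝ | (fun i => ∑ j, B i j * x j) ∈ quadrant τ}) :=
            (measure_biUnion_finset hdisj (fun τ _ => hAm τ)).symm
        _ = μ Set.univ := hunion
    rw [lintegral_congr_ae this, lintegral_const, (measure_univ : p Set.univ = 1), mul_one]
  -- conclude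
  have hcard : (Finset.univ : Finset (Fin m → Bool)).card = 2 ^ m := by
    simp [Finset.card_univ]
  have h2 : (2 : ENNReal) ^ m * ∫⁻ B, F σ B ∂p = μ Set.univ := by
    rw [← hsum]
    rw [Finset.sum_congr rfl (fun τ _ => hEq τ), Finset.sum_const, hcard, nsmul_eq_mul]
    norm_num
  rw [ENNReal.eq_div_iff (by positivity) (ENNReal.pow_ne_top (by norm_num))]
  exact h2
end
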